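/- Let S be a semigroup (or monoid) and R a commutative ring. The R-submodule of left integrals of the semigroup bialgebra R[S] is spanned as an R-module by elements of the form t = Σ_{x∈I} x, where I ranges over the left ideals of S that are finite groups. Moreover the set of left integrals equals t'·R[S] for t' = Σ_{y∈I} y for any fixed left ideal I of S that is a finite group (if one exists). -/

import Mathlib

universe u v

set_option linter.unusedSectionVars false
set_option maxHeartbeats 1000000

/-- `I` is a (finite, non-empty) left ideal of the monoid `S` which is a group. -/
def IsFiniteGroupLeftIdeal {S : Type v} [Monoid S] (I : Finset S) : Prop :=
  I.Nonempty ∧ (∀ s : S, ∀ x ∈ I, s * x ∈ I) ∧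
    ∃ e ∈ I, (∀ x ∈ I, e * x = x ∧ x * e = x) ∧ ∀ x ∈ I, ∃ y ∈ I, x * y = e ∧ y * x = e

/-- A left integral of the semigroup bialgebra `R[S]`: an element `t` with `s·t = t` for all
`s ∈ S` (equivalently `f·t = ε(f)·t` for all `f ∈ R[S]`). -/
def IsLeftIntegralMA (R : Type u) [CommRing R] {S : Type v} [Monoid S]
    (t : MonoidAlgebra R S) : Prop :=
  ∀ s : S, MonoidAlgebra.single s (1 : R) * t = t

/-- The element `t_I = ∑_{x ∈ I} x` of `R[S]`. -/
noncomputable def sumOf (R : Type u) [CommRing R] {S : Type v} [Monoid S] (I : Finset S) :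
    MonoidAlgebra R S :=
  ∑ x ∈ I, MonoidAlgebra.single x (1 : R)

section Aux
variable {R : Type u} [CommRing R] {S : Type v} [Monoid S]

lemma single_one_mul_eq_mapDomain (s : S) (t : MonoidAlgebra R S) :
    (MonoidAlgebra.single s (1:R) * t).coeff = Finsupp.mapDomain (fun x => s * x) t.coeff := by
  rw [MonoidAlgebra.mul_def, Finsupp.mapDomain]
  rw [MonoidAlgebra.coeff_single, Finsupp.sum_single_index] <;> simp [MonoidAlgebra.coeff_finsuppSum]

variable {t : MonoidAlgebra R S} (ht : IsLeftIntegralMA R t)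
include ht

lemma supp_sub_image [DecidableEq S] (s : S) :
    t.coeff.support ⊆ t.coeff.support.image (fun x => s * x) := by
  conv_lhs => rw [← ht s, single_one_mul_eq_mapDomain]
  exact Finsupp.mapDomain_support

lemma image_supp [DecidableEq S] (s : S) :
    t.coeff.support.image (fun x => s * x) = t.coeff.support :=
  (Finset.eq_of_subset_of_card_le (supp_sub_image ht s) Finset.card_image_le).symm

lemma injOn_supp (s : S) : Set.InjOn (fun x => s * x) t.coeff.support := by
  classical
  rw [← Finset.card_image_iff, image_supp ht s]

lemma mem_supp_mul {s : S} {x : S} (hx : x ∈ t.coeff.support) : s * x ∈ t.coeff.support := by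
  classical
  rw [← image_supp ht s]
  exact Finset.mem_image_of_mem _ hx

lemma exists_preimage {y : S} (s : S) (hy : y ∈ t.coeff.support) :
    ∃ x ∈ t.coeff.support, s * x = y := by
  classical
  have := (supp_sub_image ht s) hy
  simpa [Finset.mem_image] using this

lemma coeff_mul_eq {s x : S} (hx : x ∈ t.coeff.support) : t.coeff (s * x) = t.coeff x := by
  have h := Finsupp.mapDomain_apply' (↑t.coeff.support) t.coeff subset_rfl (injOn_supp ht s) hx
  rw [← single_one_mul_eq_mapDomain, ht s] at h
  exact h

lemma pow_cancel {s a : S} (ha : a ∈ t.coeff.support) : ∃ m : ℕ, s ^ (m + 1) * a = a := by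
  have hmem : ∀ n : ℕ, s ^ n * a ∈ t.coeff.support := by
    intro n
    induction n with
    | zero => simpa using ha
    | succ n ihn => rw [pow_succ', mul_assoc]; exact mem_supp_mul ht ihn
  obtain ⟨i, j, hne, hij⟩ :=
    Finite.exists_ne_map_eq_of_infinite (fun n : ℕ => (⟨s ^ n * a, hmem n⟩ : t.coeff.support))
  wlog hlt : i < j generalizing i j
  · exact this j i hne.symm hij.symm (by omega)
  have hij' : s ^ i * a = s ^ j * a := by simpa using congrArg Subtype.val hij
  refine ⟨j - i - 1, ?_⟩
  have hj : j = i + (j - i - 1 + 1) := by omega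
  rw [hj, pow_add, mul_assoc] at hij'
  have := injOn_supp ht (s ^ i) (hmem _) ha hij'.symm
  simpa using this

/-- symmetry of reachability on the support -/
lemma reach_symm {x b : S} (hx : x ∈ t.coeff.support) {s : S} (hs : s * x = b) :
    ∃ u : S, u * b = x := by
  obtain ⟨m, hm⟩ := pow_cancel ht (s := s) hx
  refine ⟨s ^ m, ?_⟩
  rw [← hs, ← mul_assoc, ← pow_succ]
  exact hm

lemma exists_class {a : S} (ha : a ∈ t.coeff.support) :
    ∃ J : Finset S, IsFiniteGroupLeftIdeal J ∧ J ⊆ t.coeff.support ∧ a ∈ J ∧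
      ∀ b ∈ J, t.coeff b = t.coeff a := by
  classical
  set J : Finset S := t.coeff.support.filter (fun b => ∃ s : S, s * a = b) with hJdef
  have hJsub : J ⊆ t.coeff.support := Finset.filter_subset _ _
  have hmemJ : ∀ {b}, b ∈ J ↔ b ∈ t.coeff.support ∧ ∃ s : S, s * a = b := by
    intro b; simp [hJdef]
  have haJ : a ∈ J := hmemJ.2 ⟨ha, 1, one_mul a⟩
  have hJideal : ∀ (s : S), ∀ x ∈ J, s * x ∈ J := by
    intro s x hx
    obtain ⟨hxs, u, hu⟩ := hmemJ.1 hx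
    exact hmemJ.2 ⟨mem_supp_mul ht hxs, s * u, by rw [mul_assoc, hu]⟩
  -- right division: ∀ x b ∈ J, ∃ y ∈ J, x * y = b
  have hdivr : ∀ x ∈ J, ∀ b ∈ J, ∃ y ∈ J, x * y = b := by
    intro x hx b hb
    obtain ⟨y, hy, hxy⟩ := exists_preimage ht x (hJsub hb)
    refine ⟨y, ?_, hxy⟩
    obtain ⟨u, hu⟩ := reach_symm ht hy hxy
    obtain ⟨_, v, hv⟩ := hmemJ.1 hb
    exact hmemJ.2 ⟨hy, u * v, by rw [mul_assoc, hv, hu]⟩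
  -- left division
  have hdivl : ∀ x ∈ J, ∀ b ∈ J, ∃ y ∈ J, y * x = b := by
    intro x hx b hb
    obtain ⟨hxs, u, hu⟩ := hmemJ.1 hx
    obtain ⟨w, hw⟩ := reach_symm ht ha hu
    obtain ⟨_, v, hv⟩ := hmemJ.1 hb
    -- (v * w) * x = v * a = b
    have hvw : (v * w) * x = b := by rw [mul_assoc, hw, hv]
    obtain ⟨m, hm⟩ := pow_cancel ht (s := x) hxs
    refine ⟨v * w * x ^ (m + 1), ?_, by rw [mul_assoc, hm, hvw]⟩
    have hxm : x ^ (m + 1) ∈ J := by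
      rw [pow_succ]
      exact hJideal _ _ hx
    exact hJideal _ _ hxm
  -- identity element
  obtain ⟨m, hm⟩ := pow_cancel ht (s := a) ha
  set e : S := a ^ (m + 1) with hedef
  have heJ : e ∈ J := by rw [hedef, pow_succ]; exact hJideal _ _ haJ
  have hee : e * e = e := by
    have key : ∀ k : ℕ, e * a ^ (k + 1) = a ^ (k + 1) := by
      intro k
      induction k with
      | zero => simpa [hedef] using hm
      | succ k ihk => rw [pow_succ, ← mul_assoc, ihk]
    exact key m
  have hid : ∀ x ∈ J, e * x = x ∧ x * e = x := by
    intro x hx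
    constructor
    · obtain ⟨z, _, hz⟩ := hdivr e heJ x hx
      rw [← hz, ← mul_assoc, hee]
    · obtain ⟨w, _, hw⟩ := hdivl e heJ x hx
      rw [← hw, mul_assoc, hee]
  have hinv : ∀ x ∈ J, ∃ y ∈ J, x * y = e ∧ y * x = e := by
    intro x hx
    obtain ⟨y, hy, hxy⟩ := hdivr x hx e heJ
    obtain ⟨y', hy', hy'x⟩ := hdivl x hx e heJ
    have : y' = y := by
      have h1 : y' * (x * y) = y' * e := by rw [hxy]
      rw [← mul_assoc, hy'x, (hid y hy).1, (hid y' hy').2] at h1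
      exact h1.symm
    exact ⟨y, hy, hxy, this ▸ hy'x⟩
  refine ⟨J, ⟨⟨a, haJ⟩, hJideal, e, heJ, hid, hinv⟩, hJsub, haJ, ?_⟩
  intro b hb
  obtain ⟨_, s, hs⟩ := hmemJ.1 hb
  rw [← hs]
  exact coeff_mul_eq ht ha
end Aux


section Aux2
variable {R : Type u} [CommRing R] {S : Type v} [Monoid S]

open scoped Classical in
lemma sumOf_apply (J : Finset S) (x : S) :
    (sumOf R J).coeff x = if x ∈ J then 1 else 0 := by
  rw [sumOf, MonoidAlgebra.coeff_sum, Finset.sum_apply']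
  simp_rw [MonoidAlgebra.coeff_single, Finsupp.single_apply]
  rw [Finset.sum_ite_eq' J x (fun _ => (1:R))]

lemma mul_sum_single {s : S} {J : Finset S} (hmap : ∀ x ∈ J, s * x ∈ J)
    (hinj : Set.InjOn (fun x => s * x) J) :
    MonoidAlgebra.single s (1:R) * sumOf R J = sumOf R J := by
  classical
  rw [sumOf, Finset.mul_sum]
  simp_rw [MonoidAlgebra.single_mul_single, one_mul]
  have himg : J.image (fun x => s * x) = J := by
    apply Finset.eq_of_subset_of_card_le
    · intro y hy
      obtain ⟨x, hx, rfl⟩ := Finset.mem_image.1 hy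
      exact hmap x hx
    · exact le_of_eq (Finset.card_image_of_injOn hinj).symm
  rw [← Finset.sum_image (f := fun y => MonoidAlgebra.single y (1:R))
    (fun x hx y hy h => hinj hx hy h), himg]

lemma figli_injOn {I : Finset S} (hI : IsFiniteGroupLeftIdeal I) (s : S) :
    Set.InjOn (fun x => s * x) I := by
  obtain ⟨-, hideal, e, he, hid, hinv⟩ := hI
  obtain ⟨y, hy, -, hys⟩ := hinv (s * e) (hideal s e he)
  have key : ∀ z ∈ I, y * (s * z) = z := by
    intro z hz
    calc y * (s * z) = y * (s * (e * z)) := by rw [(hid z hz).1]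
    _ = (y * (s * e)) * z := by rw [← mul_assoc, ← mul_assoc, mul_assoc y]
    _ = e * z := by rw [hys]
    _ = z := (hid z hz).1
  intro x hx x' hx' h
  have := congrArg (fun w => y * w) h
  simpa [key x hx, key x' hx'] using this

lemma sumOf_integral {I : Finset S} (hI : IsFiniteGroupLeftIdeal I) :
    IsLeftIntegralMA R (sumOf R I) := fun s =>
  mul_sum_single (fun x hx => hI.2.1 s x hx) (figli_injOn hI s)

lemma mulRight_injOn {I : Finset S} (hI : IsFiniteGroupLeftIdeal I) {g : S} (hg : g ∈ I) :
    Set.InjOn (fun x => x * g) I := by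
  obtain ⟨-, hideal, e, he, hid, hinv⟩ := hI
  obtain ⟨y, hy, hgy, -⟩ := hinv g hg
  intro x hx x' hx' h
  have := congrArg (fun w => w * y) h
  simp only [mul_assoc, hgy] at this
  simpa [(hid x hx).2, (hid x' hx').2] using this

lemma figli_card_le {I J : Finset S} (hI : IsFiniteGroupLeftIdeal I)
    (hJ : IsFiniteGroupLeftIdeal J) : I.card ≤ J.card := by
  classical
  obtain ⟨e, he, -, -⟩ := hI.2.2
  obtain ⟨f, hf, -, -⟩ := hJ.2.2
  have hmaps : ∀ x ∈ I, x * f ∈ J := fun x hx => hJ.2.1 x f hf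
  have hinj : Set.InjOn (fun x => x * f) I := by
    intro x hx x' hx' h
    have h2 : x * (f * e) = x' * (f * e) := by
      rw [← mul_assoc, ← mul_assoc]; exact congrArg (fun w => w * e) h
    exact mulRight_injOn hI (hI.2.1 f e he) hx hx' h2
  exact Finset.card_le_card_of_injOn _ hmaps hinj

lemma sumOf_mem_range {I J : Finset S} (hI : IsFiniteGroupLeftIdeal I)
    (hJ : IsFiniteGroupLeftIdeal J) :
    ∃ g : MonoidAlgebra R S, sumOf R J = sumOf R I * g := by
  classical
  obtain ⟨f, hf, -, -⟩ := hJ.2.2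
  refine ⟨MonoidAlgebra.single f 1, ?_⟩
  conv_rhs => rw [sumOf, Finset.sum_mul]
  simp_rw [MonoidAlgebra.single_mul_single, one_mul]
  obtain ⟨e, he, -, -⟩ := hI.2.2
  have hinj : Set.InjOn (fun x => x * f) I := by
    intro x hx x' hx' h
    have h2 : x * (f * e) = x' * (f * e) := by
      rw [← mul_assoc, ← mul_assoc]; exact congrArg (fun w => w * e) h
    exact mulRight_injOn hI (hI.2.1 f e he) hx hx' h2
  have himg : I.image (fun x => x * f) = J := by
    apply Finset.eq_of_subset_of_card_le
    · intro y hy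
      obtain ⟨x, hx, rfl⟩ := Finset.mem_image.1 hy
      exact hJ.2.1 x f hf
    · rw [Finset.card_image_of_injOn hinj]
      exact figli_card_le hJ hI
  rw [sumOf, ← himg, Finset.sum_image (fun x hx y hy h => hinj hx hy h)]


lemma mem_span_of_integral :
    ∀ (n : ℕ) (t : MonoidAlgebra R S), t.coeff.support.card ≤ n → IsLeftIntegralMA R t →
      t ∈ Submodule.span R
        {t : MonoidAlgebra R S | ∃ I : Finset S, IsFiniteGroupLeftIdeal I ∧ t = sumOf R I} := by
  intro n
  induction n with
  | zero =>
    intro t hc _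
    have : t = 0 := by
      rw [← MonoidAlgebra.coeff_eq_zero, ← Finsupp.support_eq_empty, ← Finset.card_eq_zero]
      omega
    simp [this]
  | succ n ih =>
    classical
    intro t hc ht
    by_cases h0 : t = 0
    · simp [h0]
    obtain ⟨a, ha⟩ := Finset.nonempty_iff_ne_empty.2
      (fun h => h0 (MonoidAlgebra.coeff_eq_zero.1 (Finsupp.support_eq_empty.1 h)))
    obtain ⟨J, hJ, hJsub, haJ, hconst⟩ := exists_class ht ha
    set t' := t - t.coeff a • sumOf R J with ht'def
    have hint' : IsLeftIntegralMA R t' := by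
      intro s
      rw [ht'def, mul_sub, ht s, mul_smul_comm,
        mul_sum_single (fun x hx => hJ.2.1 s x hx) (figli_injOn hJ s)]
    have hval : ∀ x, t'.coeff x = t.coeff x - t.coeff a * (if x ∈ J then 1 else 0) := by
      intro x
      rw [ht'def, MonoidAlgebra.coeff_sub, MonoidAlgebra.coeff_smul, Finsupp.sub_apply, Finsupp.smul_apply, sumOf_apply, smul_eq_mul]
    have hsupp' : t'.coeff.support ⊆ t.coeff.support.erase a := by
      intro x hx
      rw [Finsupp.mem_support_iff] at hx
      by_cases hxJ : x ∈ J
      · exact absurd (by rw [hval x, if_pos hxJ, mul_one, hconst x hxJ, sub_self]) hx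
      · rw [hval x, if_neg hxJ, mul_zero, sub_zero] at hx
        exact Finset.mem_erase.2 ⟨fun h => hxJ (h ▸ haJ), Finsupp.mem_support_iff.2 hx⟩
    have hcard : t'.coeff.support.card ≤ n := by
      have h1 := Finset.card_le_card hsupp'
      have h2 : (t.coeff.support.erase a).card < t.coeff.support.card := Finset.card_erase_lt_of_mem ha
      omega
    have hmem1 := ih t' hcard hint'
    have hmem2 : sumOf R J ∈ Submodule.span R
        {t : MonoidAlgebra R S | ∃ I : Finset S, IsFiniteGroupLeftIdeal I ∧ t = sumOf R I} :=
      Submodule.subset_span ⟨J, hJ, rfl⟩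
    have htt : t = t' + t.coeff a • sumOf R J := by rw [ht'def, sub_add_cancel]
    rw [htt]
    exact Submodule.add_mem _ hmem1 (Submodule.smul_mem _ _ hmem2)

end Aux2


/-- The left integrals of `R[S]` are spanned over `R` by the elements `∑_{x∈I} x` for `I` a
left ideal of `S` which is a finite group; and for any fixed such `I`, the set of left
integrals equals `(∑_{x∈I} x)·R[S]`. -/
theorem leftIntegrals_of_monoidAlgebra (R : Type u) [CommRing R] (S : Type v) [Monoid S] :
    ({t : MonoidAlgebra R S | IsLeftIntegralMA R t} =
      ↑(Submodule.span R
        {t : MonoidAlgebra R S | ∃ I : Finset S, IsFiniteGroupLeftIdeal I ∧ t = sumOf R I})) ∧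
    ∀ I : Finset S, IsFiniteGroupLeftIdeal I →
      ∀ t : MonoidAlgebra R S,
        IsLeftIntegralMA R t ↔ ∃ f : MonoidAlgebra R S, t = sumOf R I * f := by
  constructor
  · apply Set.Subset.antisymm
    · intro t ht
      exact mem_span_of_integral t.coeff.support.card t le_rfl ht
    · intro t htmem
      refine Submodule.span_induction ?_ ?_ ?_ ?_ htmem
      · rintro _ ⟨I, hI, rfl⟩
        exact sumOf_integral hI
      · intro s; simp [IsLeftIntegralMA]
      · intro x y _ _ hx hy s
        rw [mul_add, hx s, hy s]
      · intro r x _ hx s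
        rw [mul_smul_comm, hx s]
  · intro I hI t
    constructor
    · intro ht
      have hspan := mem_span_of_integral t.coeff.support.card t le_rfl ht
      have hle : Submodule.span R
          {t : MonoidAlgebra R S | ∃ I : Finset S, IsFiniteGroupLeftIdeal I ∧ t = sumOf R I} ≤
          LinearMap.range (LinearMap.mulLeft R (sumOf R I)) := by
        rw [Submodule.span_le]
        rintro _ ⟨J, hJ, rfl⟩
        obtain ⟨g, hg⟩ := sumOf_mem_range (R := R) hI hJ
        exact ⟨g, hg.symm⟩
      obtain ⟨f, hf⟩ := hle hspan
      exact ⟨f, by simpa using hf.symm⟩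
    · rintro ⟨f, rfl⟩ s
      have h := sumOf_integral (R := R) hI s
      rw [← mul_assoc, h]
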